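/- Let n, m be positive integers, let C ∈ M_n be a real diagonal matrix, and let A_1, …, A_m ∈ M_n be diagonal matrices. Then W_C(A_1, …, A_m) = conv{(tr(C P^t A_1 P), …, tr(C P^t A_m P)) : P ∈ M_n is a permutation matrix}; in particular W_C(A_1, …, A_m) is polyhedral. -/

import Mathlib

open Matrix Finset

namespace SHaux

def pad {N : ℕ} (u : Fin N → ℝ) (i : ℕ) : ℝ := if h : i < N then u ⟨i, h⟩ else 0

lemma pad_lt {N : ℕ} (u : Fin N → ℝ) {i : ℕ} (h : i < N) : pad u i = u ⟨i, h⟩ := dif_pos h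

lemma pad_ge {N : ℕ} (u : Fin N → ℝ) {i : ℕ} (h : N ≤ i) : pad u i = 0 := dif_neg (not_lt.2 h)

def Psum {N : ℕ} (u : Fin N → ℝ) (k : ℕ) : ℝ := ∑ i ∈ Finset.range k, pad u i

lemma Psum_succ {N : ℕ} (u : Fin N → ℝ) (k : ℕ) (hk : k < N) :
    Psum u (k+1) = Psum u k + u ⟨k, hk⟩ := by
  rw [Psum, Finset.sum_range_succ, pad_lt u hk]; rfl

lemma Psum_one {N : ℕ} (u : Fin (N+1) → ℝ) : Psum u 1 = u 0 := by
  rw [Psum, Finset.sum_range_one, pad_lt u (Nat.succ_pos N)]; rfl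

lemma Psum_total {N : ℕ} (u : Fin N → ℝ) : Psum u N = ∑ i, u i := by
  rw [Psum, ← Fin.sum_univ_eq_sum_range (fun i => pad u i) N]
  exact Finset.sum_congr rfl fun i _ => by rw [pad_lt u i.isLt]

lemma Psum_stab {N : ℕ} (u : Fin N → ℝ) (k : ℕ) (hk : N ≤ k) : Psum u k = ∑ i, u i := by
  rw [← Psum_total]
  refine (Finset.sum_subset (Finset.range_subset_range.2 hk) fun i _ hi => ?_).symm
  simp only [Finset.mem_range, not_lt] at hi
  exact pad_ge u hi

lemma Psum_tail {N : ℕ} (u : Fin (N+1) → ℝ) (k : ℕ) :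
    Psum (fun i : Fin N => u i.succ) k = Psum u (k+1) - u 0 := by
  have h : ∀ i : ℕ, pad (fun i : Fin N => u i.succ) i = pad u (i+1) := by
    intro i
    by_cases h : i < N
    · rw [pad_lt _ h, pad_lt u (by omega : i + 1 < N + 1)]; rfl
    · rw [pad_ge _ (not_lt.1 h), pad_ge u (by omega)]
  rw [Psum]
  simp_rw [h]
  rw [eq_sub_iff_add_eq, Psum, Finset.sum_range_succ' (pad u) k]
  congr 1

lemma Psum_eq_sum_ite {N : ℕ} (u : Fin N → ℝ) (k : ℕ) :
    Psum u k = ∑ i : Fin N, if (i : ℕ) < k then u i else 0 := by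
  induction k with
  | zero => simp [Psum]
  | succ k ih =>
    rw [Psum, Finset.sum_range_succ, ← Psum, ih]
    have key : ∀ i : Fin N, (if (i:ℕ) < k + 1 then u i else 0) =
        (if (i:ℕ) < k then u i else 0) + (if (i:ℕ) = k then u i else 0) := by
      intro i
      by_cases h1 : (i:ℕ) < k
      · rw [if_pos (by omega), if_pos h1, if_neg (by omega), add_zero]
      · by_cases h2 : (i:ℕ) = k
        · rw [if_pos (by omega), if_neg h1, if_pos h2, zero_add]
        · rw [if_neg (by omega), if_neg h1, if_neg h2, add_zero]
    rw [Finset.sum_congr rfl fun i _ => key i, Finset.sum_add_distrib]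
    congr 1
    by_cases hk : k < N
    · have : ∀ i : Fin N, ((i:ℕ) = k) = (i = ⟨k, hk⟩) := by
        intro i; simp [Fin.ext_iff]
      simp_rw [this]
      rw [Finset.sum_ite_eq' Finset.univ (⟨k, hk⟩ : Fin N) u, if_pos (Finset.mem_univ _),
        pad_lt u hk]
    · have : ∀ i : Fin N, ¬((i:ℕ) = k) := fun i h => hk (h ▸ i.isLt)
      rw [pad_ge u (not_lt.1 hk)]
      simp [this]

lemma Psum_eq_filter {N : ℕ} (u : Fin N → ℝ) (k : ℕ) :
    Psum u k = ∑ i ∈ Finset.univ.filter (fun i : Fin N => (i:ℕ) < k), u i := by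
  rw [Psum_eq_sum_ite, Finset.sum_filter]

/-- One pinching (T-transform) step. -/
def Step {N : ℕ} (u w : Fin N → ℝ) : Prop :=
  ∃ a b s, a ≠ b ∧ 0 ≤ s ∧ s ≤ 1 ∧
    w = Function.update (Function.update u a (s * u a + (1 - s) * u b)) b
      ((1 - s) * u a + s * u b)

def Reach {N : ℕ} : (Fin N → ℝ) → (Fin N → ℝ) → Prop := Relation.ReflTransGen Step

lemma step_swap {N : ℕ} (u : Fin N → ℝ) (a b : Fin N) (hab : a ≠ b) :
    Step u (u ∘ Equiv.swap a b) := by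
  refine ⟨a, b, 0, hab, le_refl _, zero_le_one, ?_⟩
  funext i
  by_cases hib : i = b
  · subst hib; simp [Equiv.swap_apply_right]
  · by_cases hia : i = a
    · subst hia; simp [Function.update_of_ne hab, Equiv.swap_apply_left, hib]
    · simp [Function.update_of_ne hib, Function.update_of_ne hia,
        Equiv.swap_apply_of_ne_of_ne hia hib]

lemma reach_perm {N : ℕ} (σ : Equiv.Perm (Fin N)) : ∀ u : Fin N → ℝ, Reach u (u ∘ σ) := by
  refine Equiv.Perm.swap_induction_on σ (fun u => ?_) (fun f x y hxy ih u => ?_)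
  · exact Relation.ReflTransGen.refl
  · exact Relation.ReflTransGen.head (step_swap u x y hxy) (ih (u ∘ Equiv.swap x y))

lemma reach_trans {N : ℕ} {u v w : Fin N → ℝ} (h1 : Reach u v) (h2 : Reach v w) : Reach u w :=
  Relation.ReflTransGen.trans h1 h2

lemma step_insertNth {N : ℕ} {u w : Fin N → ℝ} (p : Fin (N+1)) (x : ℝ) (h : Step u w) :
    Step (p.insertNth x u) (p.insertNth x w) := by
  obtain ⟨a, b, s, hab, hs0, hs1, rfl⟩ := h
  refine ⟨p.succAbove a, p.succAbove b, s,
    fun hh => hab (Fin.succAbove_right_injective hh), hs0, hs1, ?_⟩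
  funext j
  by_cases hj : j = p
  · rw [hj, Function.update_of_ne (Fin.succAbove_ne p b).symm,
      Function.update_of_ne (Fin.succAbove_ne p a).symm,
      Fin.insertNth_apply_same, Fin.insertNth_apply_same]
  · obtain ⟨i, rfl⟩ := Fin.exists_succAbove_eq hj
    rw [Fin.insertNth_apply_succAbove]
    by_cases hib : i = b
    · subst hib
      simp only [Function.update_self, Fin.insertNth_apply_succAbove]
    · rw [Function.update_of_ne
        (fun hh => hib (Fin.succAbove_right_injective hh)),
        Function.update_of_ne hib]
      by_cases hia : i = a
      · subst hia
        simp only [Function.update_self, Fin.insertNth_apply_succAbove]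
      · rw [Function.update_of_ne (fun hh => hia (Fin.succAbove_right_injective hh)),
          Function.update_of_ne hia, Fin.insertNth_apply_succAbove]

lemma reach_insertNth {N : ℕ} {u w : Fin N → ℝ} (q : Fin (N+1)) (x : ℝ) (h : Reach u w) :
    Reach (q.insertNth x u) (q.insertNth x w) :=
  Relation.ReflTransGen.lift (p := @Step (N+1)) (q.insertNth x)
    (fun _ _ hh => step_insertNth q x hh) _ _ h

end SHaux

namespace SHaux

theorem reach_of_maj : ∀ (N : ℕ) (c v : Fin N → ℝ), Antitone c → Antitone v →
    (∀ k : ℕ, Psum v k ≤ Psum c k) → (∑ i, v i = ∑ i, c i) → Reach c v := by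
  intro N
  induction N with
  | zero =>
    intro c v _ _ _ _
    have : c = v := funext fun i => i.elim0
    rw [this]
    exact Relation.ReflTransGen.refl
  | succ n ih =>
    intro c v hc hv hmaj htot
    by_cases hvc : v = c
    · rw [hvc]; exact Relation.ReflTransGen.refl
    have h01 : v 0 ≤ c 0 := by have := hmaj 1; rwa [Psum_one, Psum_one] at this
    by_cases hall : ∀ i, v 0 ≤ c i
    · exfalso; apply hvc
      have h1 : ∀ i, v i ≤ v 0 := fun i => hv (Fin.zero_le i)
      have h2 : ∀ i : Fin (n+1), 0 ≤ c i - v i := fun i => by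
        have := hall i; have := h1 i; linarith
      have h3 : ∑ i, (c i - v i) = 0 := by rw [Finset.sum_sub_distrib, htot, sub_self]
      funext i
      have := (Finset.sum_eq_zero_iff_of_nonneg (fun i _ => h2 i)).1 h3 i (Finset.mem_univ i)
      linarith
    push_neg at hall
    obtain ⟨i₀, hi₀⟩ := hall
    have hcle : ∀ p q : Fin (n+1), (p:ℕ) ≤ (q:ℕ) → c q ≤ c p := fun p q h => hc h
    set K : Finset (Fin (n+1)) := Finset.univ.filter (fun i => v 0 ≤ c i) with hK
    have h0K : (0 : Fin (n+1)) ∈ K := by simp [hK, h01]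
    have hKne : K.Nonempty := ⟨0, h0K⟩
    set kf : Fin (n+1) := K.max' hKne with hkf
    have hkfK : kf ∈ K := K.max'_mem hKne
    have hck : v 0 ≤ c kf := by
      have := hkfK; rw [hK, Finset.mem_filter] at this; exact this.2
    have hkn : (kf : ℕ) < n := by
      rcases lt_or_eq_of_le (Nat.lt_succ_iff.1 kf.isLt) with h | h
      · exact h
      · exfalso
        have h2 : c kf ≤ c i₀ := hcle i₀ kf (by omega)
        linarith
    have hk1 : (kf:ℕ) + 1 < n + 1 := by omega
    set kg : Fin (n+1) := ⟨(kf:ℕ)+1, hk1⟩ with hkg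
    have hkgv : (kg:ℕ) = (kf:ℕ)+1 := rfl
    have hknotin : kg ∉ K := by
      intro hmem
      have h2 : (kg:ℕ) ≤ (kf:ℕ) := K.le_max' kg hmem
      omega
    have hck1 : c kg < v 0 := by
      by_contra hcon; push_neg at hcon
      exact hknotin (by rw [hK, Finset.mem_filter]; exact ⟨Finset.mem_univ _, hcon⟩)
    set y : ℝ := c kf + c kg - v 0 with hy
    set s : ℝ := (v 0 - c kg) / (c kf - c kg) with hs
    have hden : 0 < c kf - c kg := by linarith
    have hs0 : 0 ≤ s := div_nonneg (by linarith) hden.le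
    have hs1 : s ≤ 1 := (div_le_one hden).2 (by linarith)
    have hval1 : s * c kf + (1 - s) * c kg = v 0 := by
      rw [hs]; field_simp; ring
    have hval2 : (1 - s) * c kf + s * c kg = y := by
      rw [hy]; nlinarith [hval1]
    have hfkg : kf ≠ kg := by
      intro h; rw [Fin.ext_iff] at h; omega
    set c' : Fin (n+1) → ℝ := Function.update (Function.update c kf (v 0)) kg y with hc'
    have hstep : Step c c' := ⟨kf, kg, s, hfkg, hs0, hs1, by rw [hc', hval1, hval2]⟩
    set tv : Fin n → ℝ := fun i => v i.succ with htv
    set d : Fin n → ℝ :=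
      fun i => if (i:ℕ) < (kf:ℕ) then c i.castSucc
        else if (i:ℕ) = (kf:ℕ) then y else c i.succ with hd
    have hyckf : y ≤ c kf := by linarith
    have hykg : c kg ≤ y := by linarith
    have hdlt : ∀ i : Fin n, (i:ℕ) < (kf:ℕ) → d i = c i.castSucc := by
      intro i h; rw [hd]; dsimp only; rw [if_pos h]
    have hdeq : ∀ i : Fin n, (i:ℕ) = (kf:ℕ) → d i = y := by
      intro i h; rw [hd]; dsimp only; rw [if_neg (by omega), if_pos h]
    have hdgt : ∀ i : Fin n, (kf:ℕ) < (i:ℕ) → d i = c i.succ := by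
      intro i h; rw [hd]; dsimp only; rw [if_neg (by omega), if_neg (by omega)]
    have hda : Antitone d := by
      intro i j hij
      have hij' : (i:ℕ) ≤ (j:ℕ) := hij
      rcases lt_trichotomy ((i:ℕ)) ((kf:ℕ)) with hi | hi | hi
      · rw [hdlt i hi]
        rcases lt_trichotomy ((j:ℕ)) ((kf:ℕ)) with hj2 | hj2 | hj2
        · rw [hdlt j hj2]; exact hcle _ _ (by simpa using hij')
        · rw [hdeq j hj2]
          exact le_trans hyckf (hcle i.castSucc kf (by simp; omega))
        · rw [hdgt j hj2]; exact hcle _ _ (by simp [Fin.val_succ]; omega)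
      · rw [hdeq i hi]
        rcases lt_trichotomy ((j:ℕ)) ((kf:ℕ)) with hj2 | hj2 | hj2
        · omega
        · rw [hdeq j hj2]
        · rw [hdgt j hj2]
          exact le_trans (hcle kg j.succ (by simp [Fin.val_succ]; omega)) hykg
      · rw [hdgt i hi]
        rcases lt_trichotomy ((j:ℕ)) ((kf:ℕ)) with hj2 | hj2 | hj2
        · omega
        · omega
        · rw [hdgt j hj2]; exact hcle _ _ (by simp [Fin.val_succ]; omega)
    have htva : Antitone tv := fun i j hij => hv (Fin.succ_le_succ_iff.2 hij)
    -- prefix sums of d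
    have hpre : ∀ k' : ℕ, k' ≤ (kf:ℕ) → Psum d k' = Psum c k' := by
      intro k'
      induction k' with
      | zero => intro _; simp [Psum]
      | succ k'' ih2 =>
        intro hk'
        have hlt : k'' < n := by omega
        have hlt2 : k'' < n + 1 := by omega
        rw [Psum_succ d k'' hlt, Psum_succ c k'' hlt2, ih2 (by omega)]
        congr 1
        rw [hd]; dsimp only
        rw [if_pos (by omega : k'' < (kf:ℕ))]
        congr 1
    have hkd : ∀ k' : ℕ, (kf:ℕ) < k' → k' ≤ n → Psum d k' = Psum c (k'+1) - v 0 := by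
      intro k'
      induction k' with
      | zero => omega
      | succ k'' ih2 =>
        intro hk'lo hk'hi
        by_cases hbase : k'' = (kf:ℕ)
        · have hlt : k'' < n := by omega
          rw [Psum_succ d k'' hlt, hpre k'' (by omega),
            Psum_succ c (k''+1) (by omega), Psum_succ c k'' (by omega)]
          have hdk : d ⟨k'', hlt⟩ = y := hdeq _ (by simpa using hbase)
          rw [hdk, hy]
          have e1 : c ⟨k'', by omega⟩ = c kf := by
            congr 1; exact Fin.ext (by simpa using hbase)
          have e2 : c ⟨k''+1, by omega⟩ = c kg := by
            congr 1; exact Fin.ext (by simp [hkgv]; omega)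
          rw [e1, e2]; ring
        · have hlt : k'' < n := by omega
          rw [Psum_succ d k'' hlt, ih2 (by omega) (by omega),
            Psum_succ c (k''+1) (by omega)]
          have hdk : d ⟨k'', hlt⟩ = c ⟨k''+1, by omega⟩ := by
            rw [hd]; dsimp only
            rw [if_neg (by omega), if_neg (by omega)]
            congr 1
          rw [hdk]; ring
    have htot' : ∑ i, tv i = ∑ i, d i := by
      have e1 : ∑ i, tv i = ∑ i, v i - v 0 := by
        rw [← Psum_total tv, Psum_tail v n, Psum_total v]
      have e2 : ∑ i, d i = ∑ i, c i - v 0 := by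
        rw [← Psum_total d, hkd n (by omega) (le_refl n), Psum_total c]
      rw [e1, e2, htot]
    have hmaj' : ∀ k' : ℕ, Psum tv k' ≤ Psum d k' := by
      intro k'
      by_cases hbig : n < k'
      · rw [Psum_stab tv k' (by omega), Psum_stab d k' (by omega), htot']
      · push_neg at hbig
        rw [Psum_tail v k']
        by_cases hsml : k' ≤ (kf:ℕ)
        · rw [hpre k' hsml]
          have h1 : Psum v (k'+1) = Psum v k' + v ⟨k', by omega⟩ := Psum_succ v k' (by omega)
          have h2 : v ⟨k', by omega⟩ ≤ v 0 := hv (Fin.zero_le _)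
          have := hmaj k'
          linarith
        · push_neg at hsml
          rw [hkd k' hsml hbig]
          have := hmaj (k'+1)
          linarith
    have hreach' : Reach d tv := ih d tv hda htva hmaj' htot'
    -- identify insertNth forms
    have hinsc : kf.insertNth (v 0) d = c' := by
      funext j
      by_cases hj : j = kf
      · rw [hj, Fin.insertNth_apply_same, hc',
          Function.update_of_ne hfkg, Function.update_self]
      · obtain ⟨i, rfl⟩ := Fin.exists_succAbove_eq hj
        rw [Fin.insertNth_apply_succAbove, hd, hc']
        dsimp only
        by_cases h1 : (i:ℕ) < (kf:ℕ)
        · rw [if_pos h1]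
          have hsa : kf.succAbove i = i.castSucc :=
            Fin.succAbove_of_castSucc_lt kf i (by rw [Fin.lt_def]; simpa using h1)
          rw [hsa, Function.update_of_ne (by rw [Fin.ne_iff_vne]; simp [hkg]; omega),
            Function.update_of_ne (by rw [Fin.ne_iff_vne]; simpa using Nat.ne_of_lt h1)]
        · have hsa : kf.succAbove i = i.succ :=
            Fin.succAbove_of_le_castSucc kf i (by rw [Fin.le_def]; simpa using not_lt.1 h1)
          rw [if_neg h1, hsa]
          by_cases h2 : (i:ℕ) = (kf:ℕ)
          · rw [if_pos h2]
            have : i.succ = kg := by rw [Fin.ext_iff]; simp [hkg, h2]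
            rw [this, Function.update_self]
          · rw [if_neg h2,
              Function.update_of_ne (by rw [Fin.ne_iff_vne]; simp [hkg]; omega),
              Function.update_of_ne (by rw [Fin.ne_iff_vne]; simp; omega)]
    have hinsv : kf.insertNth (v 0) tv = v ∘ (Fin.cycleRange kf) := by
      funext j
      by_cases hj : j = kf
      · rw [hj, Fin.insertNth_apply_same]
        show _ = v (Fin.cycleRange kf kf)
        rw [Fin.cycleRange_self]
      · obtain ⟨i, rfl⟩ := Fin.exists_succAbove_eq hj
        rw [Fin.insertNth_apply_succAbove]
        show tv i = v (Fin.cycleRange kf (kf.succAbove i))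
        by_cases h1 : (i:ℕ) < (kf:ℕ)
        · have hsa : kf.succAbove i = i.castSucc :=
            Fin.succAbove_of_castSucc_lt kf i (by rw [Fin.lt_def]; simpa using h1)
          rw [hsa, Fin.cycleRange_of_lt (by rw [Fin.lt_def]; simpa using h1)]
          rw [htv]; dsimp only
          congr 1
          rw [Fin.ext_iff, Fin.val_add_one_of_lt (Fin.castSucc_lt_last i)]
          simp
        · have hsa : kf.succAbove i = i.succ :=
            Fin.succAbove_of_le_castSucc kf i (by rw [Fin.le_def]; simpa using not_lt.1 h1)
          rw [hsa, Fin.cycleRange_of_gt (by rw [Fin.lt_def]; simp; omega)]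
    have hreach2 : Reach c' (v ∘ Fin.cycleRange kf) := by
      rw [← hinsc, ← hinsv]
      exact reach_insertNth kf (v 0) hreach'
    have hreach3 : Reach (v ∘ Fin.cycleRange kf) v := by
      have h := reach_perm (Fin.cycleRange kf)⁻¹ (v ∘ Fin.cycleRange kf)
      have e : (v ∘ Fin.cycleRange kf) ∘ ⇑(Fin.cycleRange kf)⁻¹ = v := by
        funext j
        show v (Fin.cycleRange kf ((Fin.cycleRange kf)⁻¹ j)) = v j
        rw [Equiv.Perm.inv_def, Equiv.apply_symm_apply]
      rwa [e] at h
    exact Relation.ReflTransGen.head hstep (reach_trans hreach2 hreach3)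

end SHaux

namespace SHaux

noncomputable def rot {N : ℕ} (a b : Fin N) (θ : ℝ) : Matrix (Fin N) (Fin N) ℂ :=
  Matrix.of fun i j =>
    if i = a then (if j = a then (Real.cos θ : ℂ) else if j = b then -(Real.sin θ : ℂ) else 0)
    else if i = b then (if j = a then (Real.sin θ : ℂ) else if j = b then (Real.cos θ : ℂ) else 0)
    else if i = j then 1 else 0

lemma rot_col {N : ℕ} {a b : Fin N} (hab : a ≠ b) (θ : ℝ) (j k : Fin N) :
    rot a b θ k j =
      if j = a then ((Real.cos θ : ℂ) * (if k = a then 1 else 0)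
        + (Real.sin θ : ℂ) * (if k = b then 1 else 0))
      else if j = b then (-(Real.sin θ : ℂ) * (if k = a then 1 else 0)
        + (Real.cos θ : ℂ) * (if k = b then 1 else 0))
      else (if k = j then 1 else 0) := by
  simp only [rot, Matrix.of_apply]
  by_cases hka : k = a <;> by_cases hkb : k = b <;>
    by_cases hja : j = a <;> by_cases hjb : j = b <;>
    simp_all <;> first
      | rw [if_neg (show ¬ (a = j) from fun h => hja h.symm)]
      | rw [if_neg (show ¬ (b = j) from fun h => hjb h.symm)]
      | ring_nf
      | exact fun h => hja h.symm
      | exact fun h => hjb h.symm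

lemma mul_rot_entry {N : ℕ} {a b : Fin N} (hab : a ≠ b) (θ : ℝ)
    (M : Matrix (Fin N) (Fin N) ℂ) (i j : Fin N) :
    (M * rot a b θ) i j =
      if j = a then (Real.cos θ : ℂ) * M i a + (Real.sin θ : ℂ) * M i b
      else if j = b then -(Real.sin θ : ℂ) * M i a + (Real.cos θ : ℂ) * M i b
      else M i j := by
  rw [Matrix.mul_apply]
  simp_rw [rot_col hab θ j]
  by_cases hja : j = a
  · simp only [hja, if_pos rfl]
    simp [mul_add, mul_ite, ite_mul, mul_one, mul_zero,
      Finset.sum_add_distrib, Finset.sum_ite_eq', mul_comm]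
  · simp only [if_neg hja]
    by_cases hjb : j = b
    · simp only [hjb, if_pos rfl]
      simp [mul_add, mul_ite, ite_mul, mul_one, mul_zero,
        Finset.sum_add_distrib, Finset.sum_ite_eq', mul_comm]
    · simp only [if_neg hjb]
      simp [mul_ite, mul_one, mul_zero, Finset.sum_ite_eq']

lemma rot_star_mul_entry {N : ℕ} {a b : Fin N} (hab : a ≠ b) (θ : ℝ)
    (M : Matrix (Fin N) (Fin N) ℂ) (i j : Fin N) :
    (star (rot a b θ) * M) i j =
      if i = a then (Real.cos θ : ℂ) * M a j + (Real.sin θ : ℂ) * M b j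
      else if i = b then -(Real.sin θ : ℂ) * M a j + (Real.cos θ : ℂ) * M b j
      else M i j := by
  rw [Matrix.mul_apply]
  have hstar : ∀ k, (star (rot a b θ)) i k = star (rot a b θ k i) := fun k => rfl
  simp_rw [hstar, rot_col hab θ i]
  by_cases hia : i = a
  · simp only [hia, if_pos rfl]
    simp [star_add, star_mul', apply_ite (starRingEnd ℂ), Complex.conj_ofReal,
      ← Complex.cos_conj, ← Complex.sin_conj, mul_add, add_mul, mul_ite, ite_mul, mul_one, mul_zero,
      Finset.sum_add_distrib, Finset.sum_ite_eq, Finset.sum_ite_eq', mul_comm]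
  · simp only [if_neg hia]
    by_cases hib : i = b
    · simp only [hib, if_pos rfl]
      simp [star_add, star_mul', apply_ite (starRingEnd ℂ), Complex.conj_ofReal,
        ← Complex.cos_conj, ← Complex.sin_conj, mul_add, add_mul, mul_ite, ite_mul, mul_one, mul_zero,
        Finset.sum_add_distrib, Finset.sum_ite_eq, Finset.sum_ite_eq', mul_comm]
    · simp only [if_neg hib]
      simp [ite_mul, mul_one, mul_zero, Finset.sum_ite_eq]

lemma rot_mem {N : ℕ} {a b : Fin N} (hab : a ≠ b) (θ : ℝ) :
    rot a b θ ∈ Matrix.unitaryGroup (Fin N) ℂ := by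
  rw [Matrix.mem_unitaryGroup_iff']
  ext i j
  rw [Matrix.mul_apply]
  have hstar : ∀ k, (star (rot a b θ)) i k = star (rot a b θ k i) := fun k => rfl
  simp_rw [hstar, rot_col hab θ i, rot_col hab θ j]
  rw [Matrix.one_apply]
  by_cases hia : i = a <;> by_cases hib : i = b <;>
    by_cases hja : j = a <;> by_cases hjb : j = b <;>
    simp_all [star_add, star_mul', apply_ite (starRingEnd ℂ), Complex.conj_ofReal,
      ← Complex.cos_conj, ← Complex.sin_conj, mul_add, add_mul, mul_ite, ite_mul,
      mul_one, mul_zero, Finset.sum_add_distrib, Finset.sum_ite_eq, Finset.sum_ite_eq'] <;>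
    first
      | (rw [if_neg (show ¬ (b = a) from fun h => hab h.symm)]
         linear_combination Complex.sin_sq_add_cos_sq (θ:ℂ))
      | linear_combination Complex.sin_sq_add_cos_sq (θ:ℂ)
      | ring1
      | rw [if_neg (show ¬ (a = j) from fun h => hja h.symm)]
      | rw [if_neg (show ¬ (b = j) from fun h => hjb h.symm)]
      | (rw [if_neg (show ¬ (a = i) from fun h => hia h.symm),
             if_neg (show ¬ (b = i) from fun h => hib h.symm)]
         ring1)
      | simp_all [eq_comm]

end SHaux

namespace SHaux

lemma step_diag {N : ℕ} (c : Fin N → ℝ) {u w : Fin N → ℝ} (h : Step u w)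
    (H : ∃ U ∈ Matrix.unitaryGroup (Fin N) ℂ,
      ∀ k, (star U * Matrix.diagonal (fun i => (c i : ℂ)) * U) k k = (u k : ℂ)) :
    ∃ U ∈ Matrix.unitaryGroup (Fin N) ℂ,
      ∀ k, (star U * Matrix.diagonal (fun i => (c i : ℂ)) * U) k k = (w k : ℂ) := by
  obtain ⟨a, b, s, hab, hs0, hs1, rfl⟩ := h
  obtain ⟨U, hU, hdiag⟩ := H
  set Cd : Matrix (Fin N) (Fin N) ℂ := Matrix.diagonal (fun i => (c i : ℂ)) with hCd
  set M : Matrix (Fin N) (Fin N) ℂ := star U * Cd * U with hM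
  have hCdh : Cd.conjTranspose = Cd := by
    have hstar : (star fun i => ((c i : ℂ))) = fun i => ((c i : ℂ)) :=
      funext fun i => Complex.conj_ofReal (c i)
    rw [hCd, Matrix.diagonal_conjTranspose, hstar]
  have hherm : M.conjTranspose = M := by
    rw [hM, Matrix.conjTranspose_mul, Matrix.conjTranspose_mul, hCdh,
      Matrix.star_eq_conjTranspose, Matrix.conjTranspose_conjTranspose,
      Matrix.mul_assoc]
  have hba : M b a = star (M a b) := by
    conv_lhs => rw [← hherm]
    rfl
  set r : ℝ := (M a b).re with hr
  have haddconj : M a b + M b a = ((2 * r : ℝ) : ℂ) := by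
    rw [hba, Complex.star_def, Complex.add_conj]
  set f : ℝ → ℝ := fun θ =>
    Real.cos θ ^ 2 * u a + Real.sin θ ^ 2 * u b + 2 * Real.cos θ * Real.sin θ * r with hf
  have hfc : Continuous f := by
    rw [hf]; fun_prop
  have hf0 : f 0 = u a := by rw [hf]; simp
  have hfpi : f (Real.pi / 2) = u b := by rw [hf]; simp
  set t : ℝ := s * u a + (1 - s) * u b with ht
  have htmem : t ∈ Set.uIcc (u a) (u b) := by
    rcases le_total (u a) (u b) with h | h
    · rw [Set.mem_uIcc]
      left
      constructor <;> nlinarith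
    · rw [Set.mem_uIcc]
      right
      constructor <;> nlinarith
  have hsub := intermediate_value_uIcc (hfc.continuousOn :
    ContinuousOn f (Set.uIcc 0 (Real.pi / 2)))
  rw [hf0, hfpi] at hsub
  obtain ⟨θ₀, _, hft⟩ := hsub htmem
  refine ⟨U * rot a b θ₀, Submonoid.mul_mem _ hU (rot_mem hab θ₀), ?_⟩
  have hM' : star (U * rot a b θ₀) * Cd * (U * rot a b θ₀)
      = star (rot a b θ₀) * M * rot a b θ₀ := by
    rw [hM, Matrix.star_mul]
    simp only [Matrix.mul_assoc]
  rw [hM']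
  intro k
  have hrow := rot_star_mul_entry hab θ₀ M
  have hcol := mul_rot_entry hab θ₀ (star (rot a b θ₀) * M)
  by_cases hka : k = a
  · rw [hka]
    rw [hcol a a, if_pos rfl, hrow a a, hrow a b, if_pos rfl, if_pos rfl,
      Function.update_of_ne hab, Function.update_self, hdiag a, hdiag b]
    rw [← hft, hf]
    push_cast at haddconj ⊢
    linear_combination (Complex.cos (θ₀:ℂ) * Complex.sin (θ₀:ℂ)) * haddconj
  · by_cases hkb : k = b
    · rw [hkb]
      have hba' : ¬ (b = a) := fun h => hab h.symm
      rw [hcol b b, if_neg hba', if_pos rfl,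
        hrow b a, hrow b b, if_neg hba', if_pos rfl,
        if_neg hba', if_pos rfl,
        Function.update_self, hdiag a, hdiag b]
      have hub : (1 - s) * u a + s * u b = u a + u b - t := by rw [ht]; ring
      rw [hub, ← hft, hf]
      push_cast at haddconj ⊢
      linear_combination (-(Complex.cos (θ₀:ℂ) * Complex.sin (θ₀:ℂ))) * haddconj
        + ((u a : ℂ) + (u b : ℂ)) * Complex.sin_sq_add_cos_sq (θ₀:ℂ)
    · rw [hcol k k, if_neg hka, if_neg hkb, hrow k k, if_neg hka, if_neg hkb,
        Function.update_of_ne hkb, Function.update_of_ne hka]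
      exact hdiag k

lemma exists_unitary_of_reach {N : ℕ} (c : Fin N → ℝ) {v : Fin N → ℝ} (h : Reach c v) :
    ∃ U ∈ Matrix.unitaryGroup (Fin N) ℂ,
      ∀ k, (star U * Matrix.diagonal (fun i => (c i : ℂ)) * U) k k = (v k : ℂ) := by
  induction h with
  | refl =>
    refine ⟨1, Submonoid.one_mem _, fun k => ?_⟩
    simp [Matrix.diagonal_apply_eq]
  | tail _ hstep ih => exact step_diag c hstep ih

end SHaux

namespace SHaux

lemma card_filter_lt {n k : ℕ} (hk : k ≤ n) :
    (Finset.univ.filter (fun i : Fin n => (i:ℕ) < k)).card = k := by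
  induction k with
  | zero => simp
  | succ k ih =>
    have hins : Finset.univ.filter (fun i : Fin n => (i:ℕ) < k + 1)
        = insert (⟨k, by omega⟩ : Fin n) (Finset.univ.filter (fun i : Fin n => (i:ℕ) < k)) := by
      ext i
      simp only [Finset.mem_filter, Finset.mem_insert, Finset.mem_univ, true_and, Fin.ext_iff]
      omega
    rw [hins, Finset.card_insert_of_notMem (by simp), ih (by omega)]

lemma sum_subset_le_sorted {n : ℕ} {g : Fin n → ℝ} (hg : Antitone g) (T : Finset (Fin n)) :
    ∑ i ∈ T, g i ≤ Psum g T.card := by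
  have hcard : T.card ≤ n := by
    have := Finset.card_le_card (Finset.subset_univ T)
    simpa using this
  rcases eq_or_lt_of_le hcard with heq | hlt
  · have hT : T = Finset.univ := Finset.eq_univ_of_card T (by simpa using heq)
    rw [hT, Finset.card_univ, Fintype.card_fin, Psum_total]
  · set P : Finset (Fin n) := Finset.univ.filter (fun i : Fin n => (i:ℕ) < T.card) with hP
    have hPcard : P.card = T.card := card_filter_lt hcard
    set t : ℝ := g ⟨T.card, hlt⟩ with htt
    have key : ∑ i ∈ T, (g i - t) ≤ ∑ i ∈ P, (g i - t) := by
      have hsplit : ∑ i ∈ T ∩ P, (g i - t) + ∑ i ∈ T \ P, (g i - t) = ∑ i ∈ T, (g i - t) :=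
        Finset.sum_inter_add_sum_sdiff T P _
      have hdrop : ∑ i ∈ T \ P, (g i - t) ≤ 0 := by
        refine Finset.sum_nonpos fun i hi => ?_
        have h' := (Finset.mem_sdiff.1 hi).2
        rw [hP] at h'
        have h'' : T.card ≤ (i:ℕ) := by simpa using h'
        have hle : g i ≤ t := by
          rw [htt]
          exact hg (by rw [Fin.le_def]; simpa using h'')
        linarith
      have hgrow : ∑ i ∈ T ∩ P, (g i - t) ≤ ∑ i ∈ P, (g i - t) := by
        refine Finset.sum_le_sum_of_subset_of_nonneg Finset.inter_subset_right fun i hi _ => ?_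
        have : (i:ℕ) < T.card := by
          rw [hP] at hi
          simpa using hi
        have hge : t ≤ g i := by
          rw [htt]
          exact hg (by rw [Fin.le_def]; simp; omega)
        linarith
      linarith
    have h1 : ∑ i ∈ T, (g i - t) = ∑ i ∈ T, g i - T.card * t := by
      rw [Finset.sum_sub_distrib, Finset.sum_const, nsmul_eq_mul]
    have h2 : ∑ i ∈ P, (g i - t) = Psum g T.card - T.card * t := by
      rw [Finset.sum_sub_distrib, Finset.sum_const, hPcard, nsmul_eq_mul, ← Psum_eq_filter]
    linarith

lemma exists_antitone_perm {n : ℕ} (g : Fin n → ℝ) :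
    ∃ σ : Equiv.Perm (Fin n), Antitone (g ∘ σ) := by
  refine ⟨Tuple.sort (-g), fun i j hij => ?_⟩
  have h := Tuple.monotone_sort (-g) hij
  simpa using h

noncomputable def phiMap {n m : ℕ} (c : Fin n → ℝ) (dv : Fin m → Fin n → ℂ) :
    (Fin n → ℝ) →ₗ[ℝ] (Fin m → ℂ) where
  toFun := fun v j => ∑ k, v k • dv j k
  map_add' := fun v w => by
    funext j
    simp [add_smul, Finset.sum_add_distrib]
  map_smul' := fun r v => by
    funext j
    simp only [Pi.smul_apply, smul_eq_mul, RingHom.id_apply]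
    rw [Finset.smul_sum]
    exact Finset.sum_congr rfl fun k _ => (smul_smul r (v k) (dv j k)).symm

noncomputable def tMap {n : ℕ} (c : Fin n → ℝ) :
    Matrix (Fin n) (Fin n) ℝ →ₗ[ℝ] (Fin n → ℝ) where
  toFun := fun D k => ∑ i, c i * D i k
  map_add' := fun D E => by
    funext k
    simp [mul_add, Finset.sum_add_distrib]
  map_smul' := fun r D => by
    funext k
    simp only [Matrix.smul_apply, smul_eq_mul, RingHom.id_apply, Pi.smul_apply]
    rw [Finset.mul_sum]
    exact Finset.sum_congr rfl fun i _ => by ring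

end SHaux

open Matrix

/-- The joint `C`-numerical range of a tuple of matrices
`W_C(A_1, …, A_m) = {(tr(C U*A₁U), …, tr(C U*AₘU)) : U unitary} ⊆ ℂ^m`. -/
noncomputable def jointCNumRange {n m : ℕ} (C : Matrix (Fin n) (Fin n) ℂ)
    (A : Fin m → Matrix (Fin n) (Fin n) ℂ) : Set (Fin m → ℂ) :=
  { p | ∃ U ∈ Matrix.unitaryGroup (Fin n) ℂ, ∀ j, p j = (C * (star U * A j * U)).trace }

/-- A subset of a real vector space is polyhedral if it is the convex hull of a finite set. -/
def IsPolyhedral {E : Type*} [AddCommGroup E] [Module ℝ E] (S : Set E) : Prop :=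
  ∃ F : Set E, F.Finite ∧ S = convexHull ℝ F

theorem stmt_3 {n m : ℕ} (hn : 0 < n) (hm : 0 < m)
    (c : Fin n → ℝ) (C : Matrix (Fin n) (Fin n) ℂ)
    (hC : C = Matrix.diagonal fun i => (c i : ℂ))
    (A : Fin m → Matrix (Fin n) (Fin n) ℂ)
    (hA : ∀ j, ∃ d : Fin n → ℂ, A j = Matrix.diagonal d) :
    jointCNumRange C A =
      convexHull ℝ { p : Fin m → ℂ | ∃ σ : Equiv.Perm (Fin n),
        ∀ j, p j = (C * ((σ.permMatrix ℂ)ᵀ * A j * σ.permMatrix ℂ)).trace } ∧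
    IsPolyhedral (jointCNumRange C A) := by
  classical
  choose dv hdv using hA
  subst hC
  set S : Set (Fin m → ℂ) := { p : Fin m → ℂ | ∃ σ : Equiv.Perm (Fin n),
      ∀ j, p j = ((Matrix.diagonal fun i => (c i : ℂ)) *
        ((σ.permMatrix ℂ)ᵀ * A j * σ.permMatrix ℂ)).trace } with hSdef
  set V : Set (Fin n → ℝ) := Set.range (fun σ : Equiv.Perm (Fin n) => c ∘ ⇑σ) with hVdef
  -- permutation matrix entries
  have hPC : ∀ (σ : Equiv.Perm (Fin n)) (k x : Fin n),
      (σ.permMatrix ℂ) k x = if σ k = x then 1 else 0 := fun σ k x => by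
    simp [Equiv.Perm.permMatrix, PEquiv.toMatrix_apply, Equiv.toPEquiv_apply]
  have hPR : ∀ (σ : Equiv.Perm (Fin n)) (k x : Fin n),
      (σ.permMatrix ℝ) k x = if σ k = x then 1 else 0 := fun σ k x => by
    simp [Equiv.Perm.permMatrix, PEquiv.toMatrix_apply, Equiv.toPEquiv_apply]
  -- trace of permutation points
  have htr : ∀ (σ : Equiv.Perm (Fin n)) (j : Fin m),
      ((Matrix.diagonal fun i => (c i : ℂ)) *
        ((σ.permMatrix ℂ)ᵀ * A j * σ.permMatrix ℂ)).trace
        = ∑ i, (c i : ℂ) * dv j (σ⁻¹ i) := by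
    intro σ j
    rw [hdv j]
    have hX : ∀ x, ((σ.permMatrix ℂ)ᵀ * Matrix.diagonal (dv j) * σ.permMatrix ℂ) x x
        = dv j (σ⁻¹ x) := by
      intro x
      rw [Matrix.mul_assoc, Matrix.mul_apply]
      have hterm : ∀ k, ((σ.permMatrix ℂ)ᵀ) x k
            * (Matrix.diagonal (dv j) * σ.permMatrix ℂ) k x
          = if k = σ⁻¹ x then dv j (σ⁻¹ x) else 0 := by
        intro k
        rw [Matrix.transpose_apply, Matrix.diagonal_mul, hPC σ k x]
        by_cases hcond : σ k = x
        · have hk : k = σ⁻¹ x := by rw [← hcond, Equiv.Perm.inv_def, Equiv.symm_apply_apply]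
          rw [if_pos hcond, if_pos hk, hk]
          ring
        · rw [if_neg hcond,
            if_neg (fun h => hcond (by rw [h, Equiv.Perm.inv_def, Equiv.apply_symm_apply]))]
          ring
      rw [Finset.sum_congr rfl fun k _ => hterm k,
        Finset.sum_ite_eq' Finset.univ (σ⁻¹ x) (fun _ => dv j (σ⁻¹ x)),
        if_pos (Finset.mem_univ _)]
    simp only [Matrix.trace, Matrix.diag]
    refine Finset.sum_congr rfl fun x _ => ?_
    rw [Matrix.diagonal_mul, hX x]
  -- phi applied to permuted c
  have hΦσ : ∀ (σ : Equiv.Perm (Fin n)) (j : Fin m),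
      (SHaux.phiMap c dv) (c ∘ ⇑σ) j = ∑ i, (c i : ℂ) * dv j (σ⁻¹ i) := by
    intro σ j
    show (∑ k, (c ∘ ⇑σ) k • dv j k) = _
    simp_rw [Complex.real_smul]
    rw [← Equiv.sum_comp σ (fun i => ((c i : ℂ)) * dv j (σ⁻¹ i))]
    refine Finset.sum_congr rfl fun k _ => ?_
    rw [Equiv.Perm.inv_def, Equiv.symm_apply_apply]
    rfl
  -- S is the image of V
  have hS : S = (SHaux.phiMap c dv) '' V := by
    ext q
    constructor
    · rintro ⟨σ, hq⟩
      refine ⟨c ∘ ⇑σ, ⟨σ, rfl⟩, ?_⟩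
      funext j
      rw [hΦσ σ j, ← htr σ j, ← hq j]
    · rintro ⟨w, ⟨σ, rfl⟩, rfl⟩
      exact ⟨σ, fun j => by rw [htr σ j]; exact hΦσ σ j⟩
  -- main equality
  have hmain : jointCNumRange (Matrix.diagonal fun i => (c i : ℂ)) A = convexHull ℝ S := by
    ext p
    constructor
    · -- forward: numerical range ⊆ hull
      rintro ⟨U, hU, hp⟩
      have hU1 : star U * U = 1 := Matrix.mem_unitaryGroup_iff'.1 hU
      have hU2 : U * star U = 1 := Matrix.mem_unitaryGroup_iff.1 hU
      set Dm : Matrix (Fin n) (Fin n) ℝ :=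
        Matrix.of (fun i k => Complex.normSq (U k i)) with hDm
      have hrowsum : ∀ i, ∑ k, Dm i k = 1 := by
        intro i
        have h := congrFun (congrFun hU1 i) i
        rw [Matrix.mul_apply, Matrix.one_apply_eq] at h
        have he : ∀ k, (star U) i k * U k i = ((Complex.normSq (U k i) : ℝ) : ℂ) := by
          intro k
          rw [Matrix.star_apply, Complex.star_def, ← Complex.normSq_eq_conj_mul_self]
        rw [Finset.sum_congr rfl fun k _ => he k] at h
        exact_mod_cast h
      have hcolsum : ∀ k, ∑ i, Dm i k = 1 := by
        intro k
        have h := congrFun (congrFun hU2 k) k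
        rw [Matrix.mul_apply, Matrix.one_apply_eq] at h
        have he : ∀ i, U k i * (star U) i k = ((Complex.normSq (U k i) : ℝ) : ℂ) := by
          intro i
          rw [Matrix.star_apply, Complex.star_def, Complex.mul_conj]
        rw [Finset.sum_congr rfl fun i _ => he i] at h
        exact_mod_cast h
      have hDS : Dm ∈ doublyStochastic ℝ (Fin n) :=
        mem_doublyStochastic_iff_sum.2
          ⟨fun i j => Complex.normSq_nonneg _, hrowsum, hcolsum⟩
      -- p is the image of Dm
      have hpj : ∀ j, p j = (SHaux.phiMap c dv) (SHaux.tMap c Dm) j := by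
        intro j
        rw [hp j, hdv j]
        have hY : ∀ x, (star U * Matrix.diagonal (dv j) * U) x x
            = ∑ k, (Complex.normSq (U k x) : ℂ) * dv j k := by
          intro x
          rw [Matrix.mul_assoc, Matrix.mul_apply]
          refine Finset.sum_congr rfl fun k _ => ?_
          rw [Matrix.diagonal_mul, Matrix.star_apply, Complex.star_def,
            show (starRingEnd ℂ) (U k x) * (dv j k * U k x)
              = ((starRingEnd ℂ) (U k x) * U k x) * dv j k from by ring,
            ← Complex.normSq_eq_conj_mul_self]
        have hL : (SHaux.phiMap c dv) (SHaux.tMap c Dm) j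
            = ∑ x, ∑ k, (c x : ℂ) * ((Complex.normSq (U k x) : ℂ) * dv j k) := by
          show (∑ k, (∑ i, c i * Dm i k) • dv j k) = _
          simp_rw [Finset.sum_smul]
          rw [Finset.sum_comm]
          refine Finset.sum_congr rfl fun x _ => Finset.sum_congr rfl fun k _ => ?_
          rw [Complex.real_smul]
          push_cast
          rw [show Dm x k = Complex.normSq (U k x) from rfl]
          ring
        have h1 : ((Matrix.diagonal fun i => (c i : ℂ)) *
            (star U * Matrix.diagonal (dv j) * U)).trace
            = ∑ x, (c x : ℂ) * (star U * Matrix.diagonal (dv j) * U) x x := by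
          simp only [Matrix.trace, Matrix.diag]
          exact Finset.sum_congr rfl fun x _ => Matrix.diagonal_mul _ _ x x
        rw [h1, hL]
        refine Finset.sum_congr rfl fun x _ => ?_
        rw [hY x, Finset.mul_sum]
      have hpfun : p = (SHaux.phiMap c dv ∘ₗ SHaux.tMap c) Dm := funext hpj
      have h1 : Dm ∈ convexHull ℝ {M : Matrix (Fin n) (Fin n) ℝ |
          ∃ σ : Equiv.Perm (Fin n), σ.permMatrix ℝ = M} := by
        rw [← doublyStochastic_eq_convexHull_permMatrix]
        exact hDS
      have h2 := Set.mem_image_of_mem (SHaux.phiMap c dv ∘ₗ SHaux.tMap c) h1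
      rw [(SHaux.phiMap c dv ∘ₗ SHaux.tMap c).image_convexHull] at h2
      rw [hpfun]
      refine convexHull_mono ?_ h2
      rintro q ⟨Mq, ⟨σ, rfl⟩, rfl⟩
      have hT : SHaux.tMap c (σ.permMatrix ℝ) = c ∘ ⇑σ⁻¹ := by
        funext k
        show (∑ i, c i * (σ.permMatrix ℝ) i k) = c (σ⁻¹ k)
        simp_rw [hPR σ]
        have hcond : ∀ i : Fin n, (σ i = k) = (i = σ⁻¹ k) := fun i =>
          propext (Equiv.apply_eq_iff_eq_symm_apply σ)
        simp_rw [hcond]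
        simp [Finset.sum_ite_eq', mul_ite]
      rw [hS]
      refine ⟨c ∘ ⇑σ⁻¹, ⟨σ⁻¹, rfl⟩, ?_⟩
      show (SHaux.phiMap c dv) (c ∘ ⇑σ⁻¹) = (SHaux.phiMap c dv) (SHaux.tMap c (σ.permMatrix ℝ))
      rw [hT]
    · -- backward: hull ⊆ numerical range
      intro hmem
      rw [hS, ← (SHaux.phiMap c dv).image_convexHull V] at hmem
      obtain ⟨v, hvhull, hpv⟩ := hmem
      have hVtot : ∑ i, v i = ∑ i, c i := by
        have hlin : IsLinearMap ℝ (fun x : Fin n → ℝ => ∑ i, x i) :=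
          ⟨fun a b => by simp [Finset.sum_add_distrib], fun r a => by simp [Finset.mul_sum]⟩
        have hsub : V ⊆ {w : Fin n → ℝ | (fun x : Fin n → ℝ => ∑ i, x i) w = ∑ i, c i} := by
          rintro w ⟨σ, rfl⟩
          exact Equiv.sum_comp σ c
        exact convexHull_min hsub (convex_hyperplane hlin _) hvhull
      obtain ⟨β, hcβ⟩ := SHaux.exists_antitone_perm c
      obtain ⟨α, hvα⟩ := SHaux.exists_antitone_perm v
      have hVsub : ∀ T : Finset (Fin n), ∑ i ∈ T, v i ≤ SHaux.Psum (c ∘ ⇑β) T.card := by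
        intro T
        have hlin : IsLinearMap ℝ (fun x : Fin n → ℝ => ∑ i ∈ T, x i) :=
          ⟨fun a b => by simp [Finset.sum_add_distrib], fun r a => by simp [Finset.mul_sum]⟩
        have hsub : V ⊆ {w : Fin n → ℝ |
            (fun x : Fin n → ℝ => ∑ i ∈ T, x i) w ≤ SHaux.Psum (c ∘ ⇑β) T.card} := by
          rintro w ⟨σ, rfl⟩
          show (∑ i ∈ T, c (σ i)) ≤ _
          have himg : ∑ i ∈ T, c (σ i) = ∑ i ∈ T.image ⇑σ, c i :=
            (Finset.sum_image (fun x _ y _ h => σ.injective h)).symm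
          have h2 : ∑ i ∈ T.image ⇑σ, c i = ∑ i ∈ (T.image ⇑σ).image ⇑β⁻¹, (c ∘ ⇑β) i := by
            rw [Finset.sum_image (fun x _ y _ h => β⁻¹.injective h)]
            refine Finset.sum_congr rfl fun i _ => ?_
            show c i = c (β (β⁻¹ i))
            rw [Equiv.Perm.inv_def, Equiv.apply_symm_apply]
          have h3 := SHaux.sum_subset_le_sorted hcβ ((T.image ⇑σ).image ⇑β⁻¹)
          rw [Finset.card_image_of_injective _ β⁻¹.injective,
            Finset.card_image_of_injective _ σ.injective] at h3
          rw [himg, h2]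
          exact h3
        exact convexHull_min hsub (convex_halfSpace_le hlin _) hvhull
      have hmaj : ∀ k : ℕ, SHaux.Psum (v ∘ ⇑α) k ≤ SHaux.Psum (c ∘ ⇑β) k := by
        intro k
        by_cases hk : k ≤ n
        · rw [SHaux.Psum_eq_filter (v ∘ ⇑α) k]
          have himg : ∑ i ∈ Finset.univ.filter (fun i : Fin n => (i:ℕ) < k), (v ∘ ⇑α) i
              = ∑ i ∈ (Finset.univ.filter (fun i : Fin n => (i:ℕ) < k)).image ⇑α, v i := by
            rw [Finset.sum_image (fun x _ y _ h => α.injective h)]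
            rfl
          rw [himg]
          have h1 := hVsub ((Finset.univ.filter (fun i : Fin n => (i:ℕ) < k)).image ⇑α)
          rw [Finset.card_image_of_injective _ α.injective, SHaux.card_filter_lt hk] at h1
          exact h1
        · rw [SHaux.Psum_stab _ k (by omega), SHaux.Psum_stab _ k (by omega)]
          rw [show ∑ i, (v ∘ ⇑α) i = ∑ i, v i from Equiv.sum_comp α v,
            show ∑ i, (c ∘ ⇑β) i = ∑ i, c i from Equiv.sum_comp β c, hVtot]
      have htot2 : ∑ i, (v ∘ ⇑α) i = ∑ i, (c ∘ ⇑β) i := by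
        rw [show ∑ i, (v ∘ ⇑α) i = ∑ i, v i from Equiv.sum_comp α v,
          show ∑ i, (c ∘ ⇑β) i = ∑ i, c i from Equiv.sum_comp β c, hVtot]
      have hreach : SHaux.Reach c v := by
        have r1 := SHaux.reach_perm β c
        have r2 := SHaux.reach_of_maj n (c ∘ ⇑β) (v ∘ ⇑α) hcβ hvα hmaj htot2
        have r3 : SHaux.Reach (v ∘ ⇑α) v := by
          have h := SHaux.reach_perm α⁻¹ (v ∘ ⇑α)
          have e : (v ∘ ⇑α) ∘ ⇑α⁻¹ = v := by
            funext x
            show v (α (α⁻¹ x)) = v x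
            rw [Equiv.Perm.inv_def, Equiv.apply_symm_apply]
          rwa [e] at h
        exact SHaux.reach_trans (SHaux.reach_trans r1 r2) r3
      obtain ⟨Uu, hUu, hdiagU⟩ := SHaux.exists_unitary_of_reach c hreach
      refine ⟨star Uu, Unitary.star_mem hUu, fun j => ?_⟩
      rw [star_star, hdv j, ← hpv]
      have hcy : ((Matrix.diagonal fun i => (c i : ℂ)) *
            (Uu * Matrix.diagonal (dv j) * star Uu)).trace
          = ((star Uu * (Matrix.diagonal fun i => (c i : ℂ)) * Uu)
              * Matrix.diagonal (dv j)).trace := by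
        rw [show (Matrix.diagonal fun i => (c i : ℂ)) * (Uu * Matrix.diagonal (dv j) * star Uu)
            = ((Matrix.diagonal fun i => (c i : ℂ)) * Uu * Matrix.diagonal (dv j)) * star Uu from by
              simp only [Matrix.mul_assoc],
          Matrix.trace_mul_comm]
        simp only [Matrix.mul_assoc]
      rw [hcy]
      have hfin : ((star Uu * (Matrix.diagonal fun i => (c i : ℂ)) * Uu)
            * Matrix.diagonal (dv j)).trace = ∑ k, ((v k : ℂ)) * dv j k := by
        simp only [Matrix.trace, Matrix.diag]
        refine Finset.sum_congr rfl fun k _ => ?_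
        rw [Matrix.mul_diagonal, hdiagU k]
      rw [hfin]
      show (∑ k, v k • dv j k) = _
      simp_rw [Complex.real_smul]
  refine ⟨hmain, S, ?_, hmain⟩
  -- S is finite
  have : S = Set.range (fun σ : Equiv.Perm (Fin n) => fun j =>
      ((Matrix.diagonal fun i => (c i : ℂ)) *
        ((σ.permMatrix ℂ)ᵀ * A j * σ.permMatrix ℂ)).trace) := by
    ext q
    constructor
    · rintro ⟨σ, hq⟩
      exact ⟨σ, (funext hq).symm⟩
    · rintro ⟨σ, rfl⟩
      exact ⟨σ, fun j => rfl⟩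
  rw [this]
  exact Set.finite_range _
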